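/- Let f, g ∈ L^1(k,s) with g a k-variate matrix-valued trigonometric polynomial of degree r = (r_1,…,r_k), and let n ∈ ℕ^k with n ≥ 2r + e (componentwise, e the all-ones vector). Then rank(T_n(g)T_n(f) − T_n(gf)) ≤ s[n̂ − ∏_{i=1}^k (n_i − 2r_i)]. -/

import Mathlib

open MeasureTheory Matrix Filter
open scoped Real Kronecker ComplexOrder

noncomputable section

/-- The cube `(-π,π)^k`. -/
def Ik (k : ℕ) : Set (Fin k → ℝ) := Set.univ.pi fun _ => Set.Ioo (-π) π

/-- Fourier coefficients of a matrix-valued symbol. -/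
def fourierCoeffM (k s : ℕ) (f : (Fin k → ℝ) → Matrix (Fin s) (Fin s) ℂ)
    (j : Fin k → ℤ) : Matrix (Fin s) (Fin s) ℂ :=
  fun a b => (((2 * π : ℝ) ^ k)⁻¹ : ℂ) *
    ∫ x in Ik k, Complex.exp (-Complex.I * ∑ i, (j i : ℂ) * (x i : ℂ)) * f x a b

/-- Multilevel block Toeplitz matrix. -/
def toeplitz (k s : ℕ) (n : Fin k → ℕ) (f : (Fin k → ℝ) → Matrix (Fin s) (Fin s) ℂ) :
    Matrix ((∀ i, Fin (n i)) × Fin s) ((∀ i, Fin (n i)) × Fin s) ℂ :=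
  fun p q => fourierCoeffM k s f (fun i => (p.1 i : ℤ) - (q.1 i : ℤ)) p.2 q.2

/-- Singular values of a square complex matrix. -/
def singularValues {m : Type*} [Fintype m] [DecidableEq m] (A : Matrix m m ℂ) : m → ℝ :=
  fun i => Real.sqrt ((Matrix.posSemidef_conjTranspose_mul_self A).1.eigenvalues i)

/-- Trace norm (Schatten 1-norm). -/
def traceNorm {m : Type*} [Fintype m] [DecidableEq m] (A : Matrix m m ℂ) : ℝ :=
  ∑ i, singularValues A i

/-- Spectral norm (largest singular value). -/
def specNorm {m : Type*} [Fintype m] [DecidableEq m] (A : Matrix m m ℂ) : ℝ :=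
  ⨆ i, singularValues A i

/-- Essential numerical range of a matrix-valued function over `G`. -/
def ENR {k s : ℕ} (G : Set (Fin k → ℝ)) (f : (Fin k → ℝ) → Matrix (Fin s) (Fin s) ℂ) :
    Set ℂ :=
  {r : ℂ | ∀ ε > 0, 0 < volume {t ∈ G | ∃ v : EuclideanSpace ℂ (Fin s),
    ‖v‖ = 1 ∧ dist (star (v : Fin s → ℂ) ⬝ᵥ f t *ᵥ (v : Fin s → ℂ)) r < ε}}

/-- Essential range of a scalar function over `G`. -/
def essRange {k : ℕ} (G : Set (Fin k → ℝ)) (h : (Fin k → ℝ) → ℂ) : Set ℂ :=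
  {r : ℂ | ∀ ε > 0, 0 < volume {t ∈ G | dist (h t) r < ε}}

/-- Essential range of a matrix-valued function (union of essential ranges of
eigenvalue functions). -/
def matER {k s : ℕ} (G : Set (Fin k → ℝ)) (f : (Fin k → ℝ) → Matrix (Fin s) (Fin s) ℂ) :
    Set ℂ :=
  {r : ℂ | ∀ ε > 0, 0 < volume {t ∈ G | ∃ w : ℂ, (f t).charpoly.IsRoot w ∧ dist w r < ε}}

/-- `f` is weakly sectorial. -/
def WeaklySectorial {k s : ℕ} (f : (Fin k → ℝ) → Matrix (Fin s) (Fin s) ℂ) : Prop :=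
  ∃ (a : ℂ) (c : ℝ), ‖a‖ = 1 ∧ 0 ≤ c ∧ ∀ w ∈ ENR (Ik k) f, c ≤ ((starRingEnd ℂ) a * w).re

/-- Rayleigh-quotient minimal eigenvalue. -/
def minEig {s : ℕ} (M : Matrix (Fin s) (Fin s) ℂ) : ℝ :=
  ⨅ v : {v : EuclideanSpace ℂ (Fin s) // ‖v‖ = 1},
    (star ((v : EuclideanSpace ℂ (Fin s)) : Fin s → ℂ) ⬝ᵥ
      M *ᵥ ((v : EuclideanSpace ℂ (Fin s)) : Fin s → ℂ)).re

/-- `f` is sectorial. -/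
def Sectorial {k s : ℕ} (f : (Fin k → ℝ) → Matrix (Fin s) (Fin s) ℂ) : Prop :=
  ∃ (a : ℂ) (c : ℝ), ‖a‖ = 1 ∧ 0 ≤ c ∧ (∀ w ∈ ENR (Ik k) f, c ≤ ((starRingEnd ℂ) a * w).re) ∧
    ¬ (∀ᵐ x ∂(volume.restrict (Ik k)),
        minEig ((starRingEnd ℂ a) • f x + a • (f x)ᴴ) = c)

/-! ### Auxiliary lemmas -/

section Aux

lemma int1d (m : ℤ) :
    (∫ x in Set.Ioo (-π:ℝ) π, Complex.exp (Complex.I * m * x)) =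
      if m = 0 then ((2*π:ℝ):ℂ) else 0 := by
  have hπ : (-π:ℝ) ≤ π := by linarith [Real.pi_pos]
  rw [← MeasureTheory.integral_Ioc_eq_integral_Ioo, ← intervalIntegral.integral_of_le hπ]
  by_cases hm : m = 0
  · simp [hm]
    ring
  · rw [if_neg hm]
    have hc : (Complex.I * (m:ℂ)) ≠ 0 := by
      simp [Complex.I_ne_zero, hm]
    rw [show (fun x:ℝ => Complex.exp (Complex.I * (m:ℂ) * (x:ℂ))) =
        (fun x:ℝ => Complex.exp ((Complex.I * (m:ℂ)) * (x:ℂ))) from rfl]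
    rw [integral_exp_mul_complex hc]
    have h1 : Complex.exp (Complex.I * (m:ℂ) * ((π:ℝ):ℂ)) = (-1:ℂ)^m := by
      rw [show Complex.I * (m:ℂ) * ((π:ℝ):ℂ) = (m:ℂ) * ((π:ℝ) * Complex.I) by ring,
        Complex.exp_int_mul, Complex.exp_pi_mul_I]
    have h2 : Complex.exp (Complex.I * (m:ℂ) * ((-π:ℝ):ℂ)) = (-1:ℂ)^m := by
      rw [show Complex.I * (m:ℂ) * ((-π:ℝ):ℂ) = ((-m:ℤ):ℂ) * ((π:ℝ) * Complex.I) by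
          push_cast; ring,
        Complex.exp_int_mul, Complex.exp_pi_mul_I, _root_.zpow_neg, ← _root_.inv_zpow, inv_neg, inv_one]
    rw [h1, h2, sub_self, zero_div]

lemma intk {k : ℕ} (j : Fin k → ℤ) :
    (∫ x in Ik k, Complex.exp (Complex.I * ∑ i, (j i : ℂ) * (x i : ℂ))) =
      if j = 0 then (((2*π)^k : ℝ):ℂ) else 0 := by
  have hmeas : MeasurableSet (Ik k) := MeasurableSet.univ_pi fun i => measurableSet_Ioo
  have hprod : ∀ x : Fin k → ℝ, Complex.exp (Complex.I * ∑ i, (j i : ℂ) * (x i : ℂ)) =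
      ∏ i, Complex.exp (Complex.I * (j i:ℂ) * (x i:ℂ)) := by
    intro x
    rw [← Complex.exp_sum, Finset.mul_sum]
    ring_nf
  simp_rw [hprod]
  rw [← MeasureTheory.integral_indicator hmeas]
  have hind : (Ik k).indicator (fun x => ∏ i, Complex.exp (Complex.I * (j i:ℂ) * (x i:ℂ)))
      = fun x => ∏ i, (Set.Ioo (-π) π).indicator
          (fun t : ℝ => Complex.exp (Complex.I * (j i:ℂ) * (t:ℂ))) (x i) := by
    funext x
    by_cases hx : x ∈ Ik k
    · rw [Set.indicator_of_mem hx]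
      refine Finset.prod_congr rfl fun i _ => ?_
      rw [Set.indicator_of_mem (hx i (Set.mem_univ i))]
    · rw [Set.indicator_of_notMem hx]
      simp only [Ik, Set.mem_pi, Set.mem_univ, forall_true_left, not_forall] at hx
      obtain ⟨i, hi⟩ := hx
      exact ((Finset.prod_eq_zero (Finset.mem_univ i) (Set.indicator_of_notMem hi _))).symm
  rw [hind]
  rw [MeasureTheory.integral_fintype_prod_volume_eq_prod (ι := Fin k)
    (f := fun i (t:ℝ) => (Set.Ioo (-π) π).indicator
      (fun t : ℝ => Complex.exp (Complex.I * (j i:ℂ) * (t:ℂ))) t)]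
  simp_rw [MeasureTheory.integral_indicator measurableSet_Ioo, int1d]
  by_cases hj : j = 0
  · simp only [hj, if_true, Pi.zero_apply, Finset.prod_const, Finset.card_univ,
      Fintype.card_fin]
    push_cast
    ring
  · rw [if_neg hj]
    obtain ⟨i, hi⟩ := Function.ne_iff.mp hj
    rw [Pi.zero_apply] at hi
    exact Finset.prod_eq_zero (Finset.mem_univ i) (by rw [if_neg hi])

lemma ik_finite (k : ℕ) : volume (Ik k) < ⊤ := by
  rw [Ik, volume_pi_pi]
  refine ENNReal.prod_lt_top fun i _ => ?_
  rw [Real.volume_Ioo]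
  exact ENNReal.ofReal_lt_top

lemma norm_exp_eq_one (c : ℂ) (hc : c.re = 0) : ‖Complex.exp c‖ = 1 := by
  rw [Complex.norm_exp, hc, Real.exp_zero]

lemma re_mul_I_sum {k : ℕ} (m : Fin k → ℤ) (x : Fin k → ℝ) (c : ℂ) (hc : c.re = 0) :
    (c * ∑ i, (m i:ℂ) * (x i:ℂ)).re = 0 := by
  have him : (∑ i, (m i:ℂ) * (x i:ℂ)).im = 0 := by
    rw [Complex.im_sum]
    exact Finset.sum_eq_zero fun i _ => by simp
  rw [Complex.mul_re, hc, him]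
  ring

lemma cont_exp {k : ℕ} (c : ℂ) (m : Fin k → ℤ) :
    Continuous fun x : Fin k → ℝ => Complex.exp (c * ∑ i, (m i:ℂ) * (x i:ℂ)) := by
  apply Complex.continuous_exp.comp
  exact continuous_const.mul (continuous_finset_sum _ fun i _ =>
    continuous_const.mul (Complex.continuous_ofReal.comp (continuous_apply i)))

lemma integrable_exp_mul {k : ℕ} (h : (Fin k → ℝ) → ℂ) (hh : IntegrableOn h (Ik k))
    (c : ℂ) (hc : c.re = 0) (m : Fin k → ℤ) :
    IntegrableOn (fun x => Complex.exp (c * ∑ i, (m i:ℂ) * (x i:ℂ)) * h x) (Ik k) :=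
  hh.bdd_mul ((cont_exp c m).aestronglyMeasurable)
    (c := 1) (ae_of_all _ fun x => le_of_eq (norm_exp_eq_one _ (re_mul_I_sum m x c hc)))

lemma integrable_exp {k : ℕ} (c : ℂ) (hc : c.re = 0) (m : Fin k → ℤ) :
    IntegrableOn (fun x => Complex.exp (c * ∑ i, (m i:ℂ) * (x i:ℂ))) (Ik k) := by
  simpa using integrable_exp_mul (fun _ => (1:ℂ))
    (integrableOn_const (ik_finite k).ne) c hc m

lemma exp_combine {k : ℕ} (d j : Fin k → ℤ) (x : Fin k → ℝ) :
    Complex.exp (-Complex.I * ∑ i, (d i:ℂ) * (x i:ℂ)) *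
      Complex.exp (Complex.I * ∑ i, (j i:ℂ) * (x i:ℂ)) =
    Complex.exp (Complex.I * ∑ i, ((j i - d i : ℤ):ℂ) * (x i:ℂ)) := by
  rw [← Complex.exp_add]
  congr 1
  rw [Finset.mul_sum, Finset.mul_sum, Finset.mul_sum, ← Finset.sum_add_distrib]
  exact Finset.sum_congr rfl fun i _ => by push_cast; ring

lemma exp_split {k : ℕ} (d j : Fin k → ℤ) (x : Fin k → ℝ) :
    Complex.exp (-Complex.I * ∑ i, ((d i - j i : ℤ):ℂ) * (x i:ℂ)) =
    Complex.exp (-Complex.I * ∑ i, (d i:ℂ) * (x i:ℂ)) *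
      Complex.exp (Complex.I * ∑ i, (j i:ℂ) * (x i:ℂ)) := by
  rw [← Complex.exp_add]
  congr 1
  rw [Finset.mul_sum, Finset.mul_sum, Finset.mul_sum, ← Finset.sum_add_distrib]
  exact Finset.sum_congr rfl fun i _ => by push_cast; ring

lemma twopik_ne {k : ℕ} : (((2 * π : ℝ) ^ k)⁻¹ : ℂ) ≠ 0 := by
  have h : ((2*π:ℝ)^k)⁻¹ ≠ 0 := by positivity
  exact_mod_cast h

lemma twopik_cancel {k : ℕ} (z : ℂ) :
    (((2 * π : ℝ) ^ k)⁻¹ : ℂ) * (z * (((2*π)^k : ℝ):ℂ)) = z := by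
  have h' : ((((2*π:ℝ)^k) : ℝ) : ℂ) ≠ 0 := Complex.ofReal_ne_zero.mpr (by positivity)
  push_cast
  push_cast at h'
  field_simp

/-- Fourier coefficients of a trigonometric polynomial. -/
lemma coeff_poly {k s : ℕ} (r : Fin k → ℕ) (c : (Fin k → ℤ) → Matrix (Fin s) (Fin s) ℂ)
    (g : (Fin k → ℝ) → Matrix (Fin s) (Fin s) ℂ)
    (hg : ∀ x, g x = ∑ j ∈ Finset.Icc (fun i => -(r i : ℤ)) (fun i => (r i : ℤ)),
      Complex.exp (Complex.I * ∑ i, (j i : ℂ) * (x i : ℂ)) • c j)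
    (j : Fin k → ℤ) (a b : Fin s) :
    fourierCoeffM k s g j a b =
      if j ∈ Finset.Icc (fun i => -(r i : ℤ)) (fun i => (r i : ℤ)) then c j a b else 0 := by
  classical
  set box := Finset.Icc (fun i => -(r i : ℤ)) (fun i => (r i : ℤ)) with hbox
  have integrand_eq : ∀ x : Fin k → ℝ,
      Complex.exp (-Complex.I * ∑ i, (j i : ℂ) * (x i : ℂ)) * g x a b =
      ∑ j' ∈ box, c j' a b *
        Complex.exp (Complex.I * ∑ i, ((j' i - j i : ℤ):ℂ) * (x i:ℂ)) := by
    intro x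
    rw [hg x]
    simp only [Matrix.sum_apply, Matrix.smul_apply, smul_eq_mul]
    rw [Finset.mul_sum]
    refine Finset.sum_congr rfl fun j' _ => ?_
    rw [← exp_combine j j' x]
    ring
  rw [fourierCoeffM]
  simp_rw [integrand_eq]
  rw [MeasureTheory.integral_finset_sum _ (fun j' _ => by
    simpa [mul_comm] using (integrable_exp (k := k) Complex.I (by simp)
      (fun i => j' i - j i)).const_mul (c j' a b))]
  simp_rw [MeasureTheory.integral_const_mul, intk]
  have hcond : ∀ j' : Fin k → ℤ, ((fun i => j' i - j i) = (0 : Fin k → ℤ)) ↔ j' = j := by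
    intro j'
    constructor
    · intro h
      funext i
      have := congrFun h i
      simpa [sub_eq_zero] using this
    · intro h; funext i; simp [h]
  simp_rw [hcond, mul_ite, mul_zero]
  rw [Finset.sum_ite_eq' box j (fun j' => c j' a b * (((2*π)^k : ℝ):ℂ))]
  by_cases hj : j ∈ box
  · rw [if_pos hj, if_pos hj]
    exact twopik_cancel _
  · rw [if_neg hj, if_neg hj, mul_zero]

/-- Fourier coefficients of the product `g * f`. -/
lemma coeff_mul {k s : ℕ} (f g : (Fin k → ℝ) → Matrix (Fin s) (Fin s) ℂ)
    (hf : ∀ i j, IntegrableOn (fun x => f x i j) (Ik k))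
    (r : Fin k → ℕ) (c : (Fin k → ℤ) → Matrix (Fin s) (Fin s) ℂ)
    (hg : ∀ x, g x = ∑ j ∈ Finset.Icc (fun i => -(r i : ℤ)) (fun i => (r i : ℤ)),
      Complex.exp (Complex.I * ∑ i, (j i : ℂ) * (x i : ℂ)) • c j)
    (d : Fin k → ℤ) (a b : Fin s) :
    fourierCoeffM k s (fun x => g x * f x) d a b =
      ∑ j ∈ Finset.Icc (fun i => -(r i : ℤ)) (fun i => (r i : ℤ)), ∑ c' : Fin s,
        c j a c' * fourierCoeffM k s f (fun i => d i - j i) c' b := by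
  classical
  set box := Finset.Icc (fun i => -(r i : ℤ)) (fun i => (r i : ℤ)) with hboxdef
  have integrand_eq : ∀ x : Fin k → ℝ,
      Complex.exp (-Complex.I * ∑ i, (d i : ℂ) * (x i : ℂ)) * (g x * f x) a b =
      ∑ j ∈ box, ∑ c' : Fin s, c j a c' *
        (Complex.exp (-Complex.I * ∑ i, ((d i - j i : ℤ):ℂ) * (x i:ℂ)) * f x c' b) := by
    intro x
    rw [Matrix.mul_apply, hg x]
    simp only [Matrix.sum_apply, Matrix.smul_apply, smul_eq_mul]
    rw [Finset.mul_sum]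
    have step : ∀ c' : Fin s,
        Complex.exp (-Complex.I * ∑ i, (d i : ℂ) * (x i : ℂ)) *
          ((∑ j' ∈ box, Complex.exp (Complex.I * ∑ i, (j' i : ℂ) * (x i : ℂ)) * c j' a c') *
            f x c' b) =
        ∑ j' ∈ box, c j' a c' *
          (Complex.exp (-Complex.I * ∑ i, ((d i - j' i : ℤ):ℂ) * (x i:ℂ)) * f x c' b) := by
      intro c'
      rw [Finset.sum_mul, Finset.mul_sum]
      refine Finset.sum_congr rfl fun j' _ => ?_
      rw [exp_split d j' x]
      ring
    rw [Finset.sum_congr rfl fun c' _ => step c']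
    exact Finset.sum_comm
  rw [fourierCoeffM]
  simp_rw [integrand_eq]
  rw [MeasureTheory.integral_finset_sum _ (fun j' _ =>
    MeasureTheory.integrable_finset_sum _ (fun c' _ =>
      (integrable_exp_mul (fun x => f x c' b) (hf c' b) (-Complex.I) (by simp)
        (fun i => d i - j' i)).const_mul (c j' a c')))]
  rw [Finset.mul_sum]
  refine Finset.sum_congr rfl fun j' _ => ?_
  rw [MeasureTheory.integral_finset_sum _ (fun c' _ =>
    (integrable_exp_mul (fun x => f x c' b) (hf c' b) (-Complex.I) (by simp)
      (fun i => d i - j' i)).const_mul (c j' a c'))]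
  rw [Finset.mul_sum]
  refine Finset.sum_congr rfl fun c' _ => ?_
  rw [MeasureTheory.integral_const_mul, fourierCoeffM]
  ring

/-- Rank is at most the number of (potentially) nonzero rows. -/
lemma rank_le_card_rows {m' n' : Type*} [Fintype m'] [Fintype n'] [DecidableEq m']
    [DecidableEq n'] (A : Matrix m' n' ℂ) (S : Finset m')
    (h : ∀ p ∉ S, ∀ q, A p q = 0) : A.rank ≤ S.card := by
  rw [← A.rank_transpose, Matrix.rank_eq_finrank_span_cols, Matrix.col, Matrix.transpose_transpose]
  have hsub : Set.range A ⊆ insert 0 (↑(S.image A) : Set (n' → ℂ)) := by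
    rintro - ⟨p, rfl⟩
    by_cases hp : p ∈ S
    · exact Set.mem_insert_of_mem _ (by simpa using Finset.mem_image_of_mem A hp)
    · left
      funext q
      exact h p hp q
  calc Module.finrank ℂ (Submodule.span ℂ (Set.range A))
      ≤ Module.finrank ℂ (Submodule.span ℂ (insert 0 (↑(S.image A) : Set (n' → ℂ)))) :=
        Submodule.finrank_mono (Submodule.span_mono hsub)
    _ = Module.finrank ℂ (Submodule.span ℂ (↑(S.image A) : Set (n' → ℂ))) := by
        rw [Submodule.span_insert_zero]
    _ ≤ (S.image A).card := finrank_span_finset_le_card _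
    _ ≤ S.card := Finset.card_image_le

lemma card_window (N a : ℕ) :
    (Finset.univ.filter fun x : Fin N => a ≤ (x:ℕ) ∧ (x:ℕ) + a + 1 ≤ N).card
      = N - 2*a := by
  classical
  rw [show N - 2*a = (Finset.Ico a (N - a)).card by rw [Nat.card_Ico]; omega]
  refine Finset.card_nbij (fun x => (x:ℕ)) ?_ ?_ ?_
  · intro x hx
    simp only [Finset.mem_coe, Finset.mem_filter] at hx
    simp only [Finset.mem_coe, Finset.mem_Ico]
    omega
  · exact fun x _ y _ hxy => Fin.val_injective hxy
  · intro y hy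
    simp only [Finset.coe_Ico, Set.mem_Ico] at hy
    have hyN : y < N := by omega
    refine ⟨⟨y, hyN⟩, ?_, rfl⟩
    simp only [Finset.coe_filter, Set.mem_setOf_eq, Finset.mem_univ, true_and]
    omega

end Aux

/-- Rank estimate: if `g` is a matrix-valued trigonometric polynomial of degree `r`
and `n ≥ 2r + e`, then
`rank(T_n(g)T_n(f) − T_n(gf)) ≤ s[n̂ − ∏ (n_i − 2r_i)]`. -/
theorem stmt14 {k s : ℕ} (f g : (Fin k → ℝ) → Matrix (Fin s) (Fin s) ℂ)
    (hf : ∀ i j, IntegrableOn (fun x => f x i j) (Ik k))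
    (r : Fin k → ℕ) (c : (Fin k → ℤ) → Matrix (Fin s) (Fin s) ℂ)
    (hg : ∀ x, g x = ∑ j ∈ Finset.Icc (fun i => -(r i : ℤ)) (fun i => (r i : ℤ)),
      Complex.exp (Complex.I * ∑ i, (j i : ℂ) * (x i : ℂ)) • c j)
    (n : Fin k → ℕ) (hn : ∀ i, 2 * r i + 1 ≤ n i) :
    (toeplitz k s n g * toeplitz k s n f - toeplitz k s n (fun x => g x * f x)).rank ≤
      s * ((∏ i, n i) - ∏ i, (n i - 2 * r i)) := by
  classical
  set box := Finset.Icc (fun i => -(r i : ℤ)) (fun i => (r i : ℤ)) with hboxdef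
  -- the key pointwise identity for interior rows
  have key : ∀ (p q : ∀ i, Fin (n i)) (a b : Fin s),
      (∀ i, r i ≤ (p i : ℕ) ∧ (p i : ℕ) + r i + 1 ≤ n i) →
      (toeplitz k s n g * toeplitz k s n f) (p, a) (q, b) =
        toeplitz k s n (fun x => g x * f x) (p, a) (q, b) := by
    intro p q a b hp
    rw [Matrix.mul_apply]
    rw [show (toeplitz k s n (fun x => g x * f x)) (p, a) (q, b) =
        fourierCoeffM k s (fun x => g x * f x) (fun i => (p i : ℤ) - (q i : ℤ)) a b from rfl]
    rw [coeff_mul f g hf r c hg]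
    rw [Fintype.sum_prod_type]
    have hterm : ∀ m : ∀ i, Fin (n i),
        ∑ c' : Fin s, toeplitz k s n g (p, a) (m, c') * toeplitz k s n f (m, c') (q, b) =
        ∑ c' : Fin s,
          (if (fun i => (p i : ℤ) - (m i : ℤ)) ∈ box then
              c (fun i => (p i : ℤ) - (m i : ℤ)) a c' else 0) *
            fourierCoeffM k s f (fun i => (m i : ℤ) - (q i : ℤ)) c' b := by
      intro m
      refine Finset.sum_congr rfl fun c' _ => ?_
      rw [show toeplitz k s n g (p, a) (m, c') =
        fourierCoeffM k s g (fun i => (p i : ℤ) - (m i : ℤ)) a c' from rfl]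
      rw [coeff_poly r c g hg, ← hboxdef]
      rfl
    simp_rw [hterm]
    rw [← Finset.sum_filter_of_ne (p := fun m : ∀ i, Fin (n i) =>
        (fun i => (p i : ℤ) - (m i : ℤ)) ∈ box)
      (by
        intro m _ hne
        by_contra hnotin
        apply hne
        refine Finset.sum_eq_zero fun c' _ => ?_
        rw [if_neg hnotin, zero_mul])]
    refine Finset.sum_nbij' (fun m => fun i => (p i : ℤ) - (m i : ℤ))
      (fun j => fun i => (⟨min (((p i : ℤ) - j i).toNat) (n i - 1),
        lt_of_le_of_lt (Nat.min_le_right _ _) (by have := hn i; omega)⟩ : Fin (n i)))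
      ?_ ?_ ?_ ?_ ?_
    · intro m hm
      exact (Finset.mem_filter.mp hm).2
    · intro j hj
      rw [Finset.mem_Icc] at hj
      rw [Finset.mem_filter]
      refine ⟨Finset.mem_univ _, ?_⟩
      show _ ∈ box
      rw [hboxdef, Finset.mem_Icc]
      have hj1 := hj.1
      have hj2 := hj.2
      rw [Pi.le_def] at hj1 hj2 ⊢
      constructor <;> · intro i
                        have h1 := (hp i).1
                        have h2 := (hp i).2
                        have h3 := hj1 i
                        have h4 := hj2 i
                        simp only at h3 h4 ⊢
                        omega
    · intro m hm
      funext i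
      apply Fin.ext
      have h1 := (hp i).1
      have h2 := (hp i).2
      have h5 := (m i).isLt
      simp only
      omega
    · intro j hj
      funext i
      rw [Finset.mem_Icc] at hj
      have h1 := (hp i).1
      have h2 := (hp i).2
      have h3 := (hj.1 i)
      have h4 := (hj.2 i)
      simp only at h3 h4 ⊢
      omega
    · intro m hm
      have hmem := (Finset.mem_filter.mp hm).2
      refine Finset.sum_congr rfl fun c' _ => ?_
      rw [if_pos hmem, show (fun i => ((m i : ℕ):ℤ) - ((q i : ℕ):ℤ))
          = fun i => ((((p i : ℕ):ℤ)) - ((q i : ℕ):ℤ)) - ((((p i : ℕ):ℤ)) - ((m i : ℕ):ℤ)) from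
        funext fun i => by ring]
  -- assemble
  set A := toeplitz k s n g * toeplitz k s n f - toeplitz k s n (fun x => g x * f x) with hA
  set Int : Finset (∀ i, Fin (n i)) :=
    Finset.univ.filter (fun p => ∀ i, r i ≤ (p i : ℕ) ∧ (p i : ℕ) + r i + 1 ≤ n i)
    with hInt
  set S : Finset ((∀ i, Fin (n i)) × Fin s) := Intᶜ ×ˢ Finset.univ with hS
  have hzero : ∀ pa ∉ S, ∀ qb, A pa qb = 0 := by
    rintro ⟨p, a⟩ hpa ⟨q, b⟩
    have hpInt : p ∈ Int := by
      by_contra hpInt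
      exact hpa (Finset.mem_product.mpr ⟨Finset.mem_compl.mpr hpInt, Finset.mem_univ a⟩)
    have hp := (Finset.mem_filter.mp hpInt).2
    rw [hA, Matrix.sub_apply, key p q a b hp, sub_self]
  have hrank := rank_le_card_rows A S hzero
  refine hrank.trans (le_of_eq ?_)
  rw [hS, Finset.card_product, Finset.card_compl, Finset.card_univ]
  have hcardInt : Int.card = ∏ i, (n i - 2 * r i) := by
    rw [hInt]
    rw [show (Finset.univ.filter fun p : ∀ i, Fin (n i) =>
        ∀ i, r i ≤ (p i : ℕ) ∧ (p i : ℕ) + r i + 1 ≤ n i) =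
      Fintype.piFinset (fun i => Finset.univ.filter
        (fun x : Fin (n i) => r i ≤ (x:ℕ) ∧ (x:ℕ) + r i + 1 ≤ n i)) by
      ext p
      simp [Fintype.mem_piFinset]]
    rw [Fintype.card_piFinset]
    exact Finset.prod_congr rfl fun i _ => card_window (n i) (r i)
  rw [hcardInt]
  have hcardPi : Fintype.card (∀ i, Fin (n i)) = ∏ i, n i := by
    simp [Fintype.card_pi]
  rw [hcardPi, Fintype.card_fin]
  ring
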